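/- With notation as in the regular alternative Voronoi space setting: for every H ∈ 𝔭 (Q-selfadjoint elements of the Lie algebra 𝔤), the average over Ω of the function f([x]) = Q(x, Hx)/Q(x) with respect to the unique K-invariant probability measure μ vanishes: ∫_Ω Q(x,Hx)/Q(x) dμ([x]) = 0. -/

import Mathlib

set_option maxHeartbeats 1000000
set_option synthInstance.maxHeartbeats 400000
open MeasureTheory

noncomputable def bilinC {V : Type*} [NormedAddCommGroup V] [NormedSpace ℝ V]
    [FiniteDimensional ℝ V] (Q : V →ₗ[ℝ] V →ₗ[ℝ] ℝ) : V →L[ℝ] V →L[ℝ] ℝ :=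
  LinearMap.toContinuousLinearMap
    { toFun := fun v => LinearMap.toContinuousLinearMap (Q v)
      map_add' := by intro a b; ext w; simp
      map_smul' := by intro a b; ext w; simp }

@[simp] lemma bilinC_apply {V : Type*} [NormedAddCommGroup V] [NormedSpace ℝ V]
    [FiniteDimensional ℝ V] (Q : V →ₗ[ℝ] V →ₗ[ℝ] ℝ) (v w : V) :
    bilinC Q v w = Q v w := rfl

/-- On a compact group, a probability Haar measure is right invariant. -/
lemma probHaar_isMulRightInvariant {G : Type*} [Group G] [TopologicalSpace G]
    [IsTopologicalGroup G] [CompactSpace G] [T2Space G] [MeasurableSpace G] [BorelSpace G]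
    (ν : Measure G) [ν.IsHaarMeasure] [IsProbabilityMeasure ν] :
    ν.IsMulRightInvariant := by
  constructor
  intro g
  haveI : IsProbabilityMeasure (Measure.map (· * g) ν) :=
    Measure.isProbabilityMeasure_map (measurable_mul_const g).aemeasurable
  exact Measure.isHaarMeasure_eq_of_isProbabilityMeasure _ _
/-- If `J` is `Q`-selfadjoint and `x ↦ Q x (J x) / Q x x` is constant `c` on a
spanning set stable (projectively) under the exponential flow of `J`, then `J = c • 1`. -/
lemma eq_smul_one_of_const {V : Type*} [NormedAddCommGroup V] [NormedSpace ℝ V]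
    [FiniteDimensional ℝ V]
    (Q : V →ₗ[ℝ] V →ₗ[ℝ] ℝ)
    (hsymm : ∀ x y, Q x y = Q y x) (hpos : ∀ x : V, x ≠ 0 → 0 < Q x x)
    (Ω : Set V) (hΩspan : Submodule.span ℝ Ω = ⊤)
    (J : V →L[ℝ] V) (hJsa : ∀ x y, Q x (J y) = Q (J x) y)
    (hexpJ : ∀ t : ℝ, ∀ x ∈ Ω, ∃ a : ℝ, a ≠ 0 ∧ a • (NormedSpace.exp (t • J) x) ∈ Ω)
    (c : ℝ) (hconst : ∀ x ∈ Ω, Q x (J x) = c * Q x x) :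
    J = c • (1 : V →L[ℝ] V) := by
  set bQ := bilinC Q with hbQ
  have key : ∀ x ∈ Ω, J x = c • x := by
    intro x hx
    set y : ℝ → V := fun t => NormedSpace.exp (t • J) x with hy_def
    have hy : ∀ t : ℝ, HasDerivAt y (J (y t)) t := by
      intro t
      have h1 : HasDerivAt (fun u : ℝ => NormedSpace.exp (u • J))
          (J * NormedSpace.exp (t • J)) t := hasDerivAt_exp_smul_const' J t
      have h2 := ((ContinuousLinearMap.apply ℝ V x).hasFDerivAt.comp_hasDerivAt t h1)
      exact h2
    -- key pointwise relation along the flow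
    have hkey : ∀ t : ℝ, Q (y t) (J (y t)) = c * Q (y t) (y t) := by
      intro t
      obtain ⟨a, ha, haΩ⟩ := hexpJ t x hx
      have := hconst _ haΩ
      have h2 : a * a * Q (y t) (J (y t)) = c * (a * a * Q (y t) (y t)) := by
        have e1 : Q (a • y t) (J (a • y t)) = a * a * Q (y t) (J (y t)) := by
          simp [_root_.map_smul]; ring
        have e2 : Q (a • y t) (a • y t) = a * a * Q (y t) (y t) := by
          simp [_root_.map_smul]; ring
        rw [e1, e2] at this; linarith [this]
      have haa : a * a ≠ 0 := mul_ne_zero ha ha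
      exact mul_left_cancel₀ haa (by linarith [h2])
    have hy0 : y 0 = x := by simp [hy_def]
    have hJy : ∀ t : ℝ, HasDerivAt (fun s => J (y s)) (J (J (y t))) t := fun t =>
      J.hasFDerivAt.comp_hasDerivAt t (hy t)
    have hbQy : ∀ t : ℝ, HasDerivAt (fun s => bQ (y s)) (bQ (J (y t))) t := fun t =>
      bQ.hasFDerivAt.comp_hasDerivAt t (hy t)
    have hφ0 : HasDerivAt (fun s => bQ (y s) (y s)) (bQ (J x) x + bQ x (J x)) 0 := by
      have := (hbQy 0).clm_apply (hy 0)
      rwa [hy0] at this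
    have hψd : HasDerivAt (fun s => bQ (y s) (J (y s))) (bQ (J x) (J x) + bQ x (J (J x))) 0 := by
      have := (hbQy 0).clm_apply (hJy 0)
      rwa [hy0] at this
    have heq : (fun s => bQ (y s) (J (y s))) = (fun s => c * bQ (y s) (y s)) :=
      funext fun s => by simpa [hbQ] using hkey s
    have hψd2 : HasDerivAt (fun s => bQ (y s) (J (y s)))
        (c * (bQ (J x) x + bQ x (J x))) 0 := by
      rw [heq]; exact hφ0.const_mul c
    have huniq := hψd.unique hψd2
    have n1 : Q x (J x) = c * Q x x := hconst x hx
    have n2 : Q (J x) x = c * Q x x := by rw [← hsymm]; exact n1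
    have n4 : Q x (J (J x)) = Q (J x) (J x) := hJsa x (J x)
    have n3 : Q (J x) (J x) = c * (c * Q x x) := by
      simp only [bilinC_apply, hbQ] at huniq
      rw [n4, n1, n2] at huniq
      linarith [huniq]
    have hzero : Q (J x - c • x) (J x - c • x) = 0 := by
      have e : Q (J x - c • x) (J x - c • x)
          = Q (J x) (J x) - c * Q (J x) x - (c * Q x (J x) - c * (c * Q x x)) := by
        simp only [map_sub, _root_.map_smul, LinearMap.sub_apply, LinearMap.smul_apply,
          smul_eq_mul]
        ring
      rw [e, n1, n2, n3]
      ring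
    have hxeq : J x - c • x = 0 := by
      by_contra h
      exact absurd hzero (ne_of_gt (hpos _ h))
    have := sub_eq_zero.1 hxeq
    simpa using this
  have hker : Ω ⊆ (LinearMap.ker ((J : V →ₗ[ℝ] V) - c • LinearMap.id) : Set V) := by
    intro v hv
    simp only [SetLike.mem_coe, LinearMap.mem_ker, LinearMap.sub_apply, LinearMap.smul_apply,
      LinearMap.id_coe, id_eq, ContinuousLinearMap.coe_coe, sub_eq_zero]
    exact key v hv
  have hle : (⊤ : Submodule ℝ V) ≤ LinearMap.ker ((J : V →ₗ[ℝ] V) - c • LinearMap.id) := by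
    rw [← hΩspan]
    exact Submodule.span_le.2 hker
  ext v
  have hv := hle (Submodule.mem_top (x := v))
  simp only [LinearMap.mem_ker, LinearMap.sub_apply, LinearMap.smul_apply, LinearMap.id_coe,
    id_eq, ContinuousLinearMap.coe_coe, sub_eq_zero] at hv
  simpa using hv

/-- The operator on `V` associated to `k : K` by a unit-valued representation. -/
def repOp {V : Type*} [NormedAddCommGroup V] [NormedSpace ℝ V]
    {K : Type*} [Group K] (ρ : K →* (V →L[ℝ] V)ˣ) (k : K) : V →L[ℝ] V :=
  (ρ k : (V →L[ℝ] V)ˣ)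

/-- In a regular alternative Voronoi space, for every `Q`-selfadjoint `H` in `𝔭`
the average over the orbit `Ω` of `[x] ↦ Q(x,Hx)/Q(x)` with respect to the
unique `K`-invariant probability measure vanishes. -/
theorem average_quadratic_function_zero
    {V : Type*} [NormedAddCommGroup V] [NormedSpace ℝ V] [FiniteDimensional ℝ V]
    [MeasurableSpace V] [BorelSpace V]
    {K : Type*} [Group K] [TopologicalSpace K] [IsTopologicalGroup K] [CompactSpace K]
    (Q : V →ₗ[ℝ] V →ₗ[ℝ] ℝ)
    (hsymm : ∀ x y, Q x y = Q y x) (hpos : ∀ x : V, x ≠ 0 → 0 < Q x x)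
    (ρ : K →* (V →L[ℝ] V)ˣ)
    (hρcont : Continuous fun k : K => repOp ρ k)
    (hρorth : ∀ k : K, ∀ x y : V, Q (repOp ρ k x) (repOp ρ k y) = Q x y)
    (Ω : Set V) (hΩcomp : IsCompact Ω) (hΩ0 : (0 : V) ∉ Ω)
    (hΩspan : Submodule.span ℝ Ω = ⊤)
    (hΩK : ∀ k : K, ∀ x ∈ Ω, repOp ρ k x ∈ Ω)
    (hΩtrans : ∀ x ∈ Ω, ∀ y ∈ Ω, ∃ k : K, repOp ρ k x = y)
    (μ : Measure V) [IsProbabilityMeasure μ] (hμΩ : μ Ω = 1)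
    (hμinv : ∀ k : K, Measure.map (repOp ρ k) μ = μ)
    (𝔭 : Submodule ℝ (V →L[ℝ] V))
    (hsa : ∀ J ∈ 𝔭, ∀ x y, Q x (J y) = Q (J x) y)
    (hid : ∀ c : ℝ, c • (1 : V →L[ℝ] V) ∈ 𝔭 → c = 0)
    (hconj : ∀ k : K, ∀ J ∈ 𝔭, repOp ρ k⁻¹ * J * repOp ρ k ∈ 𝔭)
    (hexp : ∀ J ∈ 𝔭, ∀ t : ℝ, ∀ x ∈ Ω,
        ∃ c : ℝ, c ≠ 0 ∧ c • (NormedSpace.exp (t • J) x) ∈ Ω)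
    (H : V →L[ℝ] V) (hH : H ∈ 𝔭) :
    ∫ x in Ω, Q x (H x) / Q x x ∂μ = 0 := by
  classical
  have hΩmeas : MeasurableSet Ω := hΩcomp.isClosed.measurableSet
  have hΩne : Ω.Nonempty := by
    by_contra h
    rw [Set.not_nonempty_iff_eq_empty] at h
    rw [h] at hμΩ
    simp at hμΩ
  set bQ := bilinC Q with hbQ
  set f : V → ℝ := fun x => Q x (H x) / Q x x with hfdef
  have hfeq : f = fun x => bQ x (H x) / bQ x x := rfl
  have hfmeas : Measurable f := by
    rw [hfeq]
    exact ((bQ.continuous.clm_apply H.continuous).measurable).div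
      ((bQ.continuous.clm_apply continuous_id).measurable)
  -- Step: the group G
  have hρcont' : Continuous fun k : K => (ρ k : (V →L[ℝ] V)ˣ) := by
    refine Units.continuous_iff.2 ⟨hρcont, ?_⟩
    have : (fun k : K => (((ρ k)⁻¹ : (V →L[ℝ] V)ˣ) : V →L[ℝ] V))
        = (fun k : K => ((ρ k⁻¹ : (V →L[ℝ] V)ˣ) : V →L[ℝ] V)) := by
      funext k; rw [← map_inv]
    rw [this]
    exact hρcont.comp continuous_inv
  set G := ρ.range with hGdef
  haveI : CompactSpace G := by
    apply isCompact_iff_compactSpace.mp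
    have : (G : Set (V →L[ℝ] V)ˣ) = Set.range (fun k => ρ k) := by
      ext u; simp [hGdef, MonoidHom.mem_range, eq_comm]
    rw [this]
    exact isCompact_range hρcont'
  letI : MeasurableSpace G := borel G
  haveI : BorelSpace G := ⟨rfl⟩
  set ν₀ : Measure G := Measure.haar with hν₀
  have h0 : ν₀ Set.univ ≠ 0 := by
    simpa using (IsOpen.measure_ne_zero ν₀ isOpen_univ Set.univ_nonempty)
  have h1 : ν₀ Set.univ ≠ ⊤ := measure_ne_top _ _
  set ν : Measure G := (ν₀ Set.univ)⁻¹ • ν₀ with hν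
  haveI : IsProbabilityMeasure ν :=
    ⟨by rw [hν, Measure.smul_apply, smul_eq_mul, ENNReal.inv_mul_cancel h0 h1]⟩
  haveI : ν.IsHaarMeasure :=
    Measure.IsHaarMeasure.smul _ (ENNReal.inv_ne_zero.2 h1) (ENNReal.inv_ne_top.2 h0)
  haveI : ν.IsMulRightInvariant := probHaar_isMulRightInvariant ν
  haveI : SFinite ν := inferInstance
  -- operator associated to u : G
  set T : G → (V →L[ℝ] V) := fun u => ((u : (V →L[ℝ] V)ˣ) : V →L[ℝ] V) with hT
  have hTk : ∀ u : G, ∃ k : K, repOp ρ k = T u := by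
    rintro ⟨u, k, rfl⟩
    exact ⟨k, rfl⟩
  have hTcont : Continuous T := Units.continuous_val.comp continuous_subtype_val
  have hTmul : ∀ (u v : G) (x : V), T (u * v) x = T u (T v x) := by
    intro u v x
    simp [hT, ContinuousLinearMap.mul_apply]
  have hTinv : ∀ (u : G) (x : V), T u⁻¹ (T u x) = x := by
    intro u x
    have := hTmul u⁻¹ u x
    rw [inv_mul_cancel] at this
    simpa [hT] using this.symm
  have hTne : ∀ (u : G) (x : V), x ≠ 0 → T u x ≠ 0 := by
    intro u x hx h
    apply hx
    rw [← hTinv u x, h, map_zero]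
  -- invariance of the set integral under each k
  have hKint : ∀ k : K, ∫ x in Ω, f (repOp ρ k x) ∂μ = ∫ x in Ω, f x ∂μ := by
    intro k
    have hpre : (repOp ρ k) ⁻¹' Ω = Ω := by
      ext x
      constructor
      · intro hx
        have h2 := hΩK k⁻¹ _ hx
        have : repOp ρ k⁻¹ (repOp ρ k x) = x := by
          simp only [repOp, ← ContinuousLinearMap.mul_apply, ← Units.val_mul, ← map_mul,
            inv_mul_cancel, map_one, Units.val_one, ContinuousLinearMap.one_apply]
        rwa [this] at h2
      · intro hx
        exact hΩK k x hx
    have := setIntegral_map (μ := μ) (g := repOp ρ k) (f := f) (s := Ω) hΩmeas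
      (by rw [hμinv k]; exact hfmeas.aestronglyMeasurable)
      (repOp ρ k).continuous.measurable.aemeasurable
    rw [hμinv k, hpre] at this
    exact this.symm
  -- the conjugated operators and their average
  set conj : G → (V →L[ℝ] V) := fun u => T u⁻¹ * H * T u with hconjdef
  have hconjcont : Continuous conj :=
    (((hTcont.comp continuous_inv).mul continuous_const).mul hTcont)
  have hconjmem : ∀ u : G, conj u ∈ 𝔭 := by
    intro u
    obtain ⟨k, hk⟩ := hTk u
    have hu : (ρ k : (V →L[ℝ] V)ˣ) = (u : (V →L[ℝ] V)ˣ) := Units.ext hk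
    have hkinv : repOp ρ k⁻¹ = T u⁻¹ := by
      have h2 : (ρ k⁻¹ : (V →L[ℝ] V)ˣ) = ((u⁻¹ : G) : (V →L[ℝ] V)ˣ) := by
        rw [map_inv, hu]
        simp
      simp only [repOp, hT, h2]
    rw [hconjdef]
    simp only []
    rw [← hk, ← hkinv]
    exact hconj k H hH
  have hconjint : Integrable conj ν :=
    hconjcont.integrable_of_hasCompactSupport (HasCompactSupport.of_compactSpace _)
  set Jav : V →L[ℝ] V := ∫ u, conj u ∂ν with hJav
  -- membership of the average in 𝔭
  have hJavmem : Jav ∈ 𝔭 := by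
    obtain ⟨q, hq⟩ := Submodule.exists_isCompl 𝔭
    set π : (V →L[ℝ] V) →ₗ[ℝ] (V →L[ℝ] V) :=
      𝔭.subtype.comp (𝔭.linearProjOfIsCompl q hq) with hπ
    set πc : (V →L[ℝ] V) →L[ℝ] (V →L[ℝ] V) := LinearMap.toContinuousLinearMap π with hπc
    have hπfix : ∀ B ∈ 𝔭, πc B = B := by
      intro B hB
      simp [hπc, hπ, Submodule.linearProjOfIsCompl_apply_left hq ⟨B, hB⟩]
      exact congrArg Subtype.val (Submodule.linearProjOfIsCompl_apply_left hq ⟨B, hB⟩)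
    have hπmem : ∀ B, πc B ∈ 𝔭 := by
      intro B
      simp only [hπc, hπ]
      exact Submodule.coe_mem _
    have h2 : πc Jav = Jav := by
      rw [hJav, ← πc.integral_comp_comm hconjint]
      congr 1
      exact funext fun u => hπfix _ (hconjmem u)
    rw [← h2]
    exact hπmem _
  -- pointwise identity
  have hTinv' : ∀ (u : G) (z : V), T u (T u⁻¹ z) = z := by
    intro u z
    have := hTinv u⁻¹ z
    rwa [inv_inv] at this
  have hpoint : ∀ (u : G) (x : V), f (T u x) = Q x (conj u x) / Q x x := by
    intro u x
    obtain ⟨k, hk⟩ := hTk u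
    have e1 : T u (conj u x) = H (T u x) := by
      simp only [hconjdef, ContinuousLinearMap.mul_apply]
      exact hTinv' u _
    have hnum : Q (T u x) (H (T u x)) = Q x (conj u x) := by
      rw [← e1, ← hk]
      exact hρorth k _ _
    have hden : Q (T u x) (T u x) = Q x x := by
      rw [← hk]; exact hρorth k x x
    rw [hfdef]
    simp only []
    rw [hnum, hden]
  -- the averaged function
  set g : V → ℝ := fun x => ∫ u, f (T u x) ∂ν with hg
  have hgval : ∀ x : V, g x = Q x (Jav x) / Q x x := by
    intro x
    set L : (V →L[ℝ] V) →L[ℝ] ℝ := (bQ x).comp (ContinuousLinearMap.apply ℝ V x) with hL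
    have hLc : ∀ B : V →L[ℝ] V, L B = Q x (B x) := fun B => rfl
    have h2 : g x = ∫ u, Q x (conj u x) / Q x x ∂ν := by
      rw [hg]
      simp only []
      congr 1
      funext u
      exact hpoint u x
    rw [h2, integral_div]
    congr 1
    have h3 : (fun u : G => Q x (conj u x)) = fun u : G => L (conj u) := by
      funext u; rw [hLc]
    rw [h3, L.integral_comp_comm hconjint, hLc]
  -- invariance of g on Ω
  have hgconst : ∀ x ∈ Ω, ∀ z ∈ Ω, g z = g x := by
    intro x hx z hz
    obtain ⟨k, hkxz⟩ := hΩtrans x hx z hz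
    set m : G := ⟨ρ k, ⟨k, rfl⟩⟩ with hm
    have hmx : T m x = z := hkxz
    have h2 : (fun u : G => f (T u z)) = fun u : G => f (T (u * m) x) := by
      funext u; rw [hTmul, hmx]
    calc g z = ∫ u, f (T (u * m) x) ∂ν := by rw [hg]; simp only []; rw [h2]
    _ = ∫ u, f (T u x) ∂ν := integral_mul_right_eq_self (fun u => f (T u x)) m
    _ = g x := rfl
  -- integrability for Fubini
  have hF : Integrable (Function.uncurry fun (x : V) (u : G) => f (T u x))
      ((μ.restrict Ω).prod ν) := by
    have hres : (μ.restrict Ω).prod ν = ((μ.prod ν).restrict (Ω ×ˢ Set.univ)) := by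
      rw [← Measure.prod_restrict, Measure.restrict_univ]
    rw [hres]
    have hA : Continuous fun p : V × G => T p.2 p.1 :=
      (hTcont.comp continuous_snd).clm_apply continuous_fst
    apply ContinuousOn.integrableOn_compact (hΩcomp.prod isCompact_univ)
    have heqF : (Function.uncurry fun (x : V) (u : G) => f (T u x))
        = fun p : V × G => bQ (T p.2 p.1) (H (T p.2 p.1)) / bQ (T p.2 p.1) (T p.2 p.1) := by
      funext p
      rfl
    rw [heqF]
    apply ContinuousOn.div
    · exact ((bQ.continuous.comp hA).clm_apply (H.continuous.comp hA)).continuousOn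
    · exact ((bQ.continuous.comp hA).clm_apply hA).continuousOn
    · rintro ⟨x, u⟩ hp
      have hx : x ∈ Ω := hp.1
      have hx0 : x ≠ 0 := fun h => hΩ0 (h ▸ hx)
      have := hpos _ (hTne u x hx0)
      simpa [hbQ] using this.ne'
  -- main chain
  set I := ∫ x in Ω, f x ∂μ with hI
  obtain ⟨x₀, hx₀⟩ := hΩne
  have h1 : ∀ u : G, ∫ x in Ω, f (T u x) ∂μ = I := by
    intro u
    obtain ⟨k, hk⟩ := hTk u
    rw [← hk]
    exact hKint k
  have hchain : I = g x₀ := by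
    have h2 : I = ∫ u : G, ∫ x in Ω, f (T u x) ∂μ ∂ν := by
      simp [h1, measure_univ]
    have h3 : ∫ u : G, ∫ x in Ω, f (T u x) ∂μ ∂ν
        = ∫ x in Ω, ∫ u : G, f (T u x) ∂ν ∂μ :=
      (integral_integral_swap hF).symm
    have h4 : ∫ x in Ω, g x ∂μ = ∫ x in Ω, g x₀ ∂μ :=
      setIntegral_congr_fun hΩmeas fun z hz => hgconst x₀ hx₀ z hz
    have h5 : ∫ x in Ω, g x₀ ∂μ = g x₀ := by
      rw [setIntegral_const, measureReal_def, hμΩ]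
      simp
    rw [h2, h3]
    rw [show (∫ x in Ω, ∫ u : G, f (T u x) ∂ν ∂μ) = ∫ x in Ω, g x ∂μ from rfl]
    rw [h4, h5]
  set c := g x₀ with hc
  have hQc : ∀ x ∈ Ω, Q x (Jav x) = c * Q x x := by
    intro x hx
    have hx0 : x ≠ 0 := fun h => hΩ0 (h ▸ hx)
    have hQxx : Q x x ≠ 0 := (hpos x hx0).ne'
    have h2 : Q x (Jav x) / Q x x = c := by
      rw [← hgval x]
      exact hgconst x₀ hx₀ x hx
    field_simp at h2
    linarith [h2]
  have hJaveq : Jav = c • (1 : V →L[ℝ] V) :=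
    eq_smul_one_of_const Q hsymm hpos Ω hΩspan Jav (hsa Jav hJavmem)
      (fun t x hx => hexp Jav hJavmem t x hx) c hQc
  have hc0 : c = 0 := hid c (hJaveq ▸ hJavmem)
  show I = 0
  rw [hchain]
  exact hc0
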